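/- (Commutative case of Lemma 2.1.) Let (Ω,Σ,μ) be a measure space, let (X,+) be a semigroup, and let a_n : X → L⁰(Ω,μ;ℂ) be a sequence of additive maps (a_n(x+y) = a_n(x) + a_n(y)). Assume x̄ ∈ X is such that for every ε > 0 there exist a sequence (x_k) in X and a measurable set P with μ(Ω∖P) ≤ ε such that: (i) for every k, the sequence (a_n(x̄ + x_k))_n converges almost uniformly; (ii) sup_n esssup_{ω∈P} |a_n(x_k)(ω)| → 0 as k → ∞. Then the sequence (a_n(x̄))_n converges almost uniformly. -/

import Mathlib

open MeasureTheory Filter Topology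
open scoped ENNReal

/-- `gs n → g` almost uniformly: for every `ε > 0` there is a measurable set `E` with
`μ(Ω∖E) ≤ ε` on which `gs n → g` essentially uniformly. -/
def ConvAU {Ω : Type*} [MeasurableSpace Ω] (μ : Measure Ω) (gs : ℕ → Ω → ℂ) (g : Ω → ℂ) :
    Prop :=
  ∀ ε : ℝ, 0 < ε → ∃ E : Set Ω, MeasurableSet E ∧ μ Eᶜ ≤ ENNReal.ofReal ε ∧
    Filter.Tendsto (fun n => essSup (fun ω => (‖gs n ω - g ω‖₊ : ℝ≥0∞)) (μ.restrict E))
      Filter.atTop (nhds 0)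

section aux

lemma coe_nnnorm_add_le (x y : ℂ) : (‖x + y‖₊ : ℝ≥0∞) ≤ (‖x‖₊ : ℝ≥0∞) + (‖y‖₊ : ℝ≥0∞) := by
  exact_mod_cast nnnorm_add_le x y

lemma coe_nnnorm_sub_le (x y : ℂ) : (‖x - y‖₊ : ℝ≥0∞) ≤ (‖x‖₊ : ℝ≥0∞) + (‖y‖₊ : ℝ≥0∞) := by
  exact_mod_cast nnnorm_sub_le x y

variable {Ω : Type*} [MeasurableSpace Ω] {μ : Measure Ω}

/-- Combine a.e.-on-`E j` facts into a global a.e. fact when `μ (E j)ᶜ ≤ 1/(j+1)`. -/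
lemma ae_of_ae_on_seq {T : Ω → Prop} {E : ℕ → Set Ω}
    (hE : ∀ j : ℕ, μ (E j)ᶜ ≤ ENNReal.ofReal (1 / ((j : ℝ) + 1)))
    (hT : ∀ j : ℕ, ∀ᵐ ω ∂μ, ω ∈ E j → T ω) :
    ∀ᵐ ω ∂μ, T ω := by
  have hall : ∀ᵐ ω ∂μ, ∀ j, ω ∈ E j → T ω := ae_all_iff.2 hT
  rw [ae_iff] at hall ⊢
  have hsub : {ω | ¬ T ω} ⊆ {ω | ¬ ∀ j, ω ∈ E j → T ω} ∪ ⋂ j, (E j)ᶜ := by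
    intro ω hω
    by_cases hc : ∀ j, ω ∈ E j → T ω
    · exact Or.inr (Set.mem_iInter.2 fun j hj => hω (hc j hj))
    · exact Or.inl hc
  have h0 : μ (⋂ j, (E j)ᶜ) = 0 := by
    refine le_antisymm ?_ zero_le
    have hlim : Tendsto (fun j : ℕ => ENNReal.ofReal (1 / ((j : ℝ) + 1))) atTop (𝓝 0) := by
      rw [← ENNReal.ofReal_zero]
      exact ENNReal.tendsto_ofReal tendsto_one_div_add_atTop_nhds_zero_nat
    exact ge_of_tendsto' hlim fun j =>
      le_trans (measure_mono (Set.iInter_subset _ j)) (hE j)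
  refine le_antisymm ?_ zero_le
  calc μ {ω | ¬ T ω} ≤ μ ({ω | ¬ ∀ j, ω ∈ E j → T ω} ∪ ⋂ j, (E j)ᶜ) := measure_mono hsub
    _ ≤ μ {ω | ¬ ∀ j, ω ∈ E j → T ω} + μ (⋂ j, (E j)ᶜ) := measure_union_le _ _
    _ = 0 := by rw [hall, h0, add_zero]

/-- Almost uniform convergence implies a.e. convergence. -/
lemma convAU_ae_tendsto {fs : ℕ → Ω → ℂ} {g : Ω → ℂ} (h : ConvAU μ fs g) :
    ∀ᵐ ω ∂μ, Tendsto (fun n => fs n ω) atTop (𝓝 (g ω)) := by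
  choose E hEm hEc hEt using fun j : ℕ => h (1 / ((j : ℝ) + 1)) (by positivity)
  refine ae_of_ae_on_seq hEc fun j => ?_
  have hae : ∀ᵐ ω ∂μ.restrict (E j), ∀ n,
      (‖fs n ω - g ω‖₊ : ℝ≥0∞)
        ≤ essSup (fun ω => (‖fs n ω - g ω‖₊ : ℝ≥0∞)) (μ.restrict (E j)) :=
    ae_all_iff.2 fun n => ENNReal.ae_le_essSup _
  rw [ae_restrict_iff' (hEm j)] at hae
  filter_upwards [hae] with ω hω hmem
  have h0 : Tendsto (fun n => (‖fs n ω - g ω‖₊ : ℝ≥0∞)) atTop (𝓝 0) :=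
    tendsto_of_tendsto_of_tendsto_of_le_of_le tendsto_const_nhds (hEt j)
      (fun n => zero_le) (hω hmem)
  rw [tendsto_iff_edist_tendsto_0]
  simpa only [edist_eq_enorm_sub, enorm_eq_nnnorm] using h0

variable {X : Type*} [AddSemigroup X]

lemma ae_add_eq (a : ℕ → X → (Ω →ₘ[μ] ℂ))
    (ha_add : ∀ n (x y : X), a n (x + y) = a n x + a n y) (xbar : X) (xk : ℕ → X) :
    ∀ᵐ ω ∂μ, ∀ n k, (a n (xbar + xk k) : Ω → ℂ) ω
      = (a n xbar : Ω → ℂ) ω + (a n (xk k) : Ω → ℂ) ω := by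
  rw [ae_all_iff]; intro n; rw [ae_all_iff]; intro k
  have h1 : ((a n (xbar + xk k) : Ω →ₘ[μ] ℂ) : Ω → ℂ)
      =ᵐ[μ] ⇑(a n xbar) + ⇑(a n (xk k)) := by
    rw [ha_add n xbar (xk k)]
    exact AEEqFun.coeFn_add _ _
  filter_upwards [h1] with ω hω
  simpa using hω

lemma ae_norm_le (a : ℕ → X → (Ω →ₘ[μ] ℂ)) (xk : ℕ → X) {P : Set Ω}
    (hPm : MeasurableSet P) :
    ∀ᵐ ω ∂μ, ω ∈ P → ∀ k n, (‖(a n (xk k) : Ω → ℂ) ω‖₊ : ℝ≥0∞)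
      ≤ ⨆ m, essSup (fun ω => (‖(a m (xk k) : Ω → ℂ) ω‖₊ : ℝ≥0∞)) (μ.restrict P) := by
  rw [← ae_restrict_iff' hPm]
  rw [ae_all_iff]; intro k; rw [ae_all_iff]; intro n
  filter_upwards [ENNReal.ae_le_essSup (μ := μ.restrict P)
    (fun ω => (‖(a n (xk k) : Ω → ℂ) ω‖₊ : ℝ≥0∞))] with ω hω
  exact hω.trans (le_iSup (fun m =>
    essSup (fun ω => (‖(a m (xk k) : Ω → ℂ) ω‖₊ : ℝ≥0∞)) (μ.restrict P)) n)

/-- On `P`, the sequence `(a n xbar ω)` converges a.e. -/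
lemma ae_exists_lim (a : ℕ → X → (Ω →ₘ[μ] ℂ))
    (ha_add : ∀ n (x y : X), a n (x + y) = a n x + a n y)
    (xbar : X) (xk : ℕ → X) (P : Set Ω) (hPm : MeasurableSet P)
    (hconv : ∀ k, ∃ g : Ω → ℂ, Measurable g ∧
        ConvAU μ (fun n ω => (a n (xbar + xk k) : Ω → ℂ) ω) g)
    (hδ : Tendsto (fun k => ⨆ n,
          essSup (fun ω => (‖(a n (xk k) : Ω → ℂ) ω‖₊ : ℝ≥0∞)) (μ.restrict P))
        atTop (𝓝 0)) :
    ∀ᵐ ω ∂μ, ω ∈ P → ∃ l : ℂ, Tendsto (fun n => (a n xbar : Ω → ℂ) ω) atTop (𝓝 l) := by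
  set δ : ℕ → ℝ≥0∞ := fun k => ⨆ n,
    essSup (fun ω => (‖(a n (xk k) : Ω → ℂ) ω‖₊ : ℝ≥0∞)) (μ.restrict P) with hδdef
  choose gk hgkm hgkc using hconv
  have hgkae : ∀ᵐ ω ∂μ, ∀ k,
      Tendsto (fun n => (a n (xbar + xk k) : Ω → ℂ) ω) atTop (𝓝 (gk k ω)) :=
    ae_all_iff.2 fun k => convAU_ae_tendsto (hgkc k)
  have h2δ : Tendsto (fun k => 2 * δ k) atTop (𝓝 0) := by
    simpa using ENNReal.Tendsto.const_mul hδ (Or.inr ENNReal.ofNat_ne_top)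
  filter_upwards [ae_add_eq a ha_add xbar xk, ae_norm_le a xk hPm, hgkae]
    with ω haddω hbdω hgkω hP
  have hbd : ∀ k n, (‖(a n (xk k) : Ω → ℂ) ω‖₊ : ℝ≥0∞) ≤ δ k := hbdω hP
  have hcauchy : CauchySeq (fun n => (a n xbar : Ω → ℂ) ω) := by
    rw [EMetric.cauchySeq_iff]
    intro ε hε
    set ε' : ℝ≥0∞ := min ε 1 with hε'def
    have hε' : 0 < ε' := lt_min hε zero_lt_one
    have hhalf : (0 : ℝ≥0∞) < ε' / 2 := ENNReal.div_pos hε'.ne' ENNReal.ofNat_ne_top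
    obtain ⟨k, hk⟩ := (h2δ.eventually_lt_const hhalf).exists
    have hC : CauchySeq (fun n => (a n (xbar + xk k) : Ω → ℂ) ω) := (hgkω k).cauchySeq
    obtain ⟨N, hN⟩ := EMetric.cauchySeq_iff.1 hC (ε' / 2) hhalf
    refine ⟨N, fun m hm n hn => ?_⟩
    have key : edist ((a m xbar : Ω → ℂ) ω) ((a n xbar : Ω → ℂ) ω)
        ≤ edist ((a m (xbar + xk k) : Ω → ℂ) ω) ((a n (xbar + xk k) : Ω → ℂ) ω)
          + 2 * δ k := by
      rw [edist_eq_enorm_sub, edist_eq_enorm_sub, enorm_eq_nnnorm, enorm_eq_nnnorm]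
      have heq : (a m xbar : Ω → ℂ) ω - (a n xbar : Ω → ℂ) ω
          = ((a m (xbar + xk k) : Ω → ℂ) ω - (a n (xbar + xk k) : Ω → ℂ) ω)
            + ((a n (xk k) : Ω → ℂ) ω - (a m (xk k) : Ω → ℂ) ω) := by
        rw [haddω m k, haddω n k]; ring
      rw [heq]
      refine le_trans (coe_nnnorm_add_le _ _) ?_
      refine add_le_add le_rfl ?_
      refine le_trans (coe_nnnorm_sub_le _ _) ?_
      calc (‖(a n (xk k) : Ω → ℂ) ω‖₊ : ℝ≥0∞) + (‖(a m (xk k) : Ω → ℂ) ω‖₊ : ℝ≥0∞)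
          ≤ δ k + δ k := add_le_add (hbd k n) (hbd k m)
        _ = 2 * δ k := (two_mul _).symm
    calc edist ((a m xbar : Ω → ℂ) ω) ((a n xbar : Ω → ℂ) ω)
        ≤ edist ((a m (xbar + xk k) : Ω → ℂ) ω) ((a n (xbar + xk k) : Ω → ℂ) ω)
          + 2 * δ k := key
      _ < ε' / 2 + ε' / 2 := ENNReal.add_lt_add (hN m hm n hn) hk
      _ = ε' := ENNReal.add_halves _
      _ ≤ ε := min_le_left _ _
  exact cauchySeq_tendsto_of_complete hcauchy

end aux

/-- Lemma 2.1 (commutative): let `X` be a semigroup and `a_n : X → L⁰(Ω,μ;ℂ)` additive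
maps. If `x̄ ∈ X` is such that for every `ε > 0` there are a sequence `(x_k) ⊆ X` and a
measurable set `P` with `μ(Ω∖P) ≤ ε` such that each `(a_n(x̄ + x_k))_n` converges almost
uniformly and `sup_n esssup_P |a_n(x_k)| → 0` as `k → ∞`, then `(a_n(x̄))_n` converges
almost uniformly. -/
theorem stmt_13 {Ω : Type*} [MeasurableSpace Ω] (μ : Measure Ω)
    {X : Type*} [AddSemigroup X]
    (a : ℕ → X → (Ω →ₘ[μ] ℂ))
    (ha_add : ∀ n (x y : X), a n (x + y) = a n x + a n y)
    (xbar : X)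
    (h : ∀ ε : ℝ, 0 < ε → ∃ (xk : ℕ → X) (P : Set Ω), MeasurableSet P ∧
      μ Pᶜ ≤ ENNReal.ofReal ε ∧
      (∀ k, ∃ g : Ω → ℂ, Measurable g ∧
        ConvAU μ (fun n ω => (a n (xbar + xk k) : Ω → ℂ) ω) g) ∧
      Tendsto (fun k => ⨆ n,
          essSup (fun ω => (‖(a n (xk k) : Ω → ℂ) ω‖₊ : ℝ≥0∞)) (μ.restrict P))
        atTop (𝓝 0)) :
    ∃ g : Ω → ℂ, Measurable g ∧ ConvAU μ (fun n ω => (a n xbar : Ω → ℂ) ω) g := by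
  -- Part 1: construct the measurable a.e. limit g
  have hmeas : ∀ n, AEMeasurable (fun ω => (a n xbar : Ω → ℂ) ω) μ := fun n =>
    (a n xbar).aestronglyMeasurable.aemeasurable
  have haelim : ∀ᵐ ω ∂μ, ∃ l : ℂ,
      Tendsto (fun n => (a n xbar : Ω → ℂ) ω) atTop (𝓝 l) := by
    choose xk P hPm hPc hconv hδ using fun j : ℕ => h (1 / ((j : ℝ) + 1)) (by positivity)
    exact ae_of_ae_on_seq hPc fun j =>
      ae_exists_lim a ha_add xbar (xk j) (P j) (hPm j) (hconv j) (hδ j)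
  obtain ⟨g, hgm, hglim⟩ := measurable_limit_of_tendsto_metrizable_ae hmeas haelim
  refine ⟨g, hgm, ?_⟩
  -- Part 2: almost uniform convergence to g
  intro ε hε
  obtain ⟨xk, P, hPm, hPc, hconv, hδ⟩ := h (ε / 2) (by positivity)
  set δ : ℕ → ℝ≥0∞ := fun k => ⨆ n,
    essSup (fun ω => (‖(a n (xk k) : Ω → ℂ) ω‖₊ : ℝ≥0∞)) (μ.restrict P) with hδdef
  choose gk hgkm hgkc using hconv
  choose E hEm hEc hEt using fun k : ℕ => hgkc k (ε / 2 / 2 ^ (k + 1)) (by positivity)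
  set Es : Set Ω := P ∩ ⋂ k, E k with hEsdef
  have hEsm : MeasurableSet Es := hPm.inter (MeasurableSet.iInter fun k => hEm k)
  have hEssub : ∀ k, Es ⊆ E k := fun k =>
    (Set.inter_subset_right).trans (Set.iInter_subset _ k)
  have hEsP : Es ⊆ P := Set.inter_subset_left
  refine ⟨Es, hEsm, ?_, ?_⟩
  · -- measure of the complement
    have hcompl : Esᶜ = Pᶜ ∪ ⋃ k, (E k)ᶜ := by
      rw [hEsdef, Set.compl_inter, Set.compl_iInter]
    rw [hcompl]
    have hsum : (∑' k : ℕ, μ (E k)ᶜ) ≤ ENNReal.ofReal (ε / 2) := by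
      have hle : (∑' k : ℕ, μ (E k)ᶜ)
          ≤ ∑' k : ℕ, ENNReal.ofReal (ε / 2 / 2 ^ (k + 1)) :=
        ENNReal.tsum_le_tsum fun k => hEc k
      refine hle.trans ?_
      have hnn : ∀ k : ℕ, 0 ≤ ε / 2 / 2 ^ (k + 1) := fun k => by positivity
      have hsummable : Summable (fun k : ℕ => ε / 2 / 2 ^ (k + 1)) := by
        have : (fun k : ℕ => ε / 2 / 2 ^ (k + 1))
            = fun k : ℕ => (ε / 4) * (1 / 2) ^ k := by
          funext k
          rw [div_pow, one_pow, pow_succ]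
          ring
        rw [this]
        exact (summable_geometric_of_lt_one (by norm_num) (by norm_num)).mul_left _
      rw [← ENNReal.ofReal_tsum_of_nonneg hnn hsummable]
      refine ENNReal.ofReal_le_ofReal ?_
      have heq : (fun k : ℕ => ε / 2 / 2 ^ (k + 1))
          = fun k : ℕ => (ε / 4) * (1 / 2) ^ k := by
        funext k
        rw [div_pow, one_pow, pow_succ]
        ring
      rw [heq, tsum_mul_left, tsum_geometric_of_lt_one (by norm_num) (by norm_num)]
      rw [show ((1:ℝ) - 1/2)⁻¹ = 2 by norm_num]
      linarith
    calc μ (Pᶜ ∪ ⋃ k, (E k)ᶜ) ≤ μ Pᶜ + μ (⋃ k, (E k)ᶜ) := measure_union_le _ _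
      _ ≤ ENNReal.ofReal (ε / 2) + ∑' k : ℕ, μ (E k)ᶜ :=
          add_le_add hPc (measure_iUnion_le _)
      _ ≤ ENNReal.ofReal (ε / 2) + ENNReal.ofReal (ε / 2) := add_le_add le_rfl hsum
      _ = ENNReal.ofReal ε := by
          rw [← ENNReal.ofReal_add (by positivity) (by positivity)]
          norm_num
  · -- essSup convergence
    -- a.e. bound on ‖gk k - g‖
    have hgkae : ∀ᵐ ω ∂μ, ∀ k,
        Tendsto (fun n => (a n (xbar + xk k) : Ω → ℂ) ω) atTop (𝓝 (gk k ω)) :=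
      ae_all_iff.2 fun k => convAU_ae_tendsto (hgkc k)
    have hdiff : ∀ᵐ ω ∂μ, ω ∈ P → ∀ k,
        (‖gk k ω - g ω‖₊ : ℝ≥0∞) ≤ δ k := by
      filter_upwards [ae_add_eq a ha_add xbar xk, ae_norm_le a xk hPm, hgkae, hglim]
        with ω haddω hbdω hgkω hgω hP k
      have htend : Tendsto (fun n => (‖(a n (xk k) : Ω → ℂ) ω‖₊ : ℝ≥0∞)) atTop
          (𝓝 (‖gk k ω - g ω‖₊ : ℝ≥0∞)) := by
        have h1 : Tendsto (fun n => (a n (xbar + xk k) : Ω → ℂ) ω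
            - (a n xbar : Ω → ℂ) ω) atTop (𝓝 (gk k ω - g ω)) := (hgkω k).sub hgω
        have h2 : (fun n => (a n (xbar + xk k) : Ω → ℂ) ω - (a n xbar : Ω → ℂ) ω)
            = fun n => (a n (xk k) : Ω → ℂ) ω := by
          funext n
          rw [haddω n k]; ring
        rw [h2] at h1
        exact (ENNReal.continuous_coe.comp continuous_nnnorm).continuousAt.tendsto.comp h1
      exact le_of_tendsto htend (Eventually.of_forall fun n => hbdω hP k n)
    -- main essSup estimate
    have hptw : ∀ n k : ℕ, ∀ᵐ ω ∂μ, ω ∈ Es →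
        (‖(a n xbar : Ω → ℂ) ω - g ω‖₊ : ℝ≥0∞)
          ≤ (‖(a n (xbar + xk k) : Ω → ℂ) ω - gk k ω‖₊ : ℝ≥0∞) + 2 * δ k := by
      intro n k
      filter_upwards [ae_add_eq a ha_add xbar xk, ae_norm_le a xk hPm, hdiff]
        with ω haddω hbdω hdω hEs
      have hP : ω ∈ P := hEsP hEs
      have heq : (a n xbar : Ω → ℂ) ω - g ω
          = ((a n (xbar + xk k) : Ω → ℂ) ω - gk k ω)
            + (gk k ω - g ω) - (a n (xk k) : Ω → ℂ) ω := by
        rw [haddω n k]; ring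
      rw [heq]
      refine le_trans (coe_nnnorm_sub_le _ _) ?_
      refine le_trans (add_le_add_left (coe_nnnorm_add_le _ _) _) ?_
      rw [add_assoc]
      refine add_le_add le_rfl ?_
      calc (‖gk k ω - g ω‖₊ : ℝ≥0∞) + (‖(a n (xk k) : Ω → ℂ) ω‖₊ : ℝ≥0∞)
          ≤ δ k + δ k := add_le_add (hdω hP k) (hbdω hP k n)
        _ = 2 * δ k := (two_mul _).symm
    have hess : ∀ n k : ℕ,
        essSup (fun ω => (‖(a n xbar : Ω → ℂ) ω - g ω‖₊ : ℝ≥0∞)) (μ.restrict Es)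
          ≤ essSup (fun ω => (‖(a n (xbar + xk k) : Ω → ℂ) ω - gk k ω‖₊ : ℝ≥0∞))
              (μ.restrict (E k)) + 2 * δ k := by
      intro n k
      refine essSup_le_of_ae_le _ ?_
      have h1 : ∀ᵐ ω ∂μ.restrict Es,
          (‖(a n (xbar + xk k) : Ω → ℂ) ω - gk k ω‖₊ : ℝ≥0∞)
            ≤ essSup (fun ω => (‖(a n (xbar + xk k) : Ω → ℂ) ω - gk k ω‖₊ : ℝ≥0∞))
                (μ.restrict (E k)) :=
        Eventually.filter_mono
          (ae_mono (Measure.restrict_mono (hEssub k) le_rfl))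
          (ENNReal.ae_le_essSup _)
      have h2 : ∀ᵐ ω ∂μ.restrict Es,
          (‖(a n xbar : Ω → ℂ) ω - g ω‖₊ : ℝ≥0∞)
            ≤ (‖(a n (xbar + xk k) : Ω → ℂ) ω - gk k ω‖₊ : ℝ≥0∞) + 2 * δ k :=
        (ae_restrict_iff' hEsm).2 (hptw n k)
      filter_upwards [h1, h2] with ω h1 h2
      exact h2.trans (add_le_add_left h1 _)
    rw [ENNReal.tendsto_nhds_zero]
    intro η hη
    have hη2 : (0 : ℝ≥0∞) < η / 2 := ENNReal.div_pos hη.ne' ENNReal.ofNat_ne_top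
    have h2δ : Tendsto (fun k => 2 * δ k) atTop (𝓝 0) := by
      simpa using ENNReal.Tendsto.const_mul hδ (Or.inr ENNReal.ofNat_ne_top)
    obtain ⟨k, hk⟩ := (h2δ.eventually_lt_const hη2).exists
    filter_upwards [(hEt k).eventually_lt_const hη2] with n hn
    calc essSup (fun ω => (‖(a n xbar : Ω → ℂ) ω - g ω‖₊ : ℝ≥0∞)) (μ.restrict Es)
        ≤ essSup (fun ω => (‖(a n (xbar + xk k) : Ω → ℂ) ω - gk k ω‖₊ : ℝ≥0∞))
            (μ.restrict (E k)) + 2 * δ k := hess n k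
      _ ≤ η / 2 + η / 2 := add_le_add hn.le hk.le
      _ = η := ENNReal.add_halves _
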